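/- arXiv:2111.05520 — 4 statements merged into one kernel-verified Lean document; each statement's English description precedes it below -/
import Mathlib

section
/- Let Ω ⊂ ℍ be an axially symmetric slice domain, v ∈ ℍ, and f : Ω → ℍ be C¹. Then f is v-slice regular (i.e. for every i ∈ 𝕊², ∂(f|_{Ω_i})/∂z̄_i + (1/4)(v - ivi)·f|_{Ω_i} = 0 on Ω_i) if and only if the function q ↦ e^{⟨q,v⟩} f(q) is slice regular on Ω. -/
open Quaternion

noncomputable section

/-- Real Euclidean inner product on the quaternions (sum of products of components). -/
def qinner (q v : ℍ[ℝ]) : ℝ :=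
  q.re * v.re + q.imI * v.imI + q.imJ * v.imJ + q.imK * v.imK

/-- The sphere of purely imaginary unit quaternions. -/
def Sph2 : Set ℍ[ℝ] := {i | i.re = 0 ∧ ‖i‖ = 1}

/-- The complex slice plane `ℂ(i) = {x + y i : x, y ∈ ℝ}`. -/
def slicePlane (i : ℍ[ℝ]) : Set ℍ[ℝ] := {z | ∃ x y : ℝ, z = (x : ℍ[ℝ]) + y • i}

/-- The slice Cauchy–Riemann operator `∂/∂ z̄_i = (1/2)(∂/∂x + i ∂/∂y)`. -/
def dbar (i : ℍ[ℝ]) (f : ℍ[ℝ] → ℍ[ℝ]) (q : ℍ[ℝ]) : ℍ[ℝ] :=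
  (1 / 2 : ℝ) • (fderiv ℝ f q 1 + i * fderiv ℝ f q i)

/-- Slice regular functions on `Ω`. -/
def SliceRegularOn (f : ℍ[ℝ] → ℍ[ℝ]) (Ω : Set ℍ[ℝ]) : Prop :=
  ContDiffOn ℝ 1 f Ω ∧ ∀ i ∈ Sph2, ∀ q ∈ Ω ∩ slicePlane i, dbar i f q = 0

/-- `v`-slice regular functions on `Ω`. -/
def VSliceRegularOn (v : ℍ[ℝ]) (f : ℍ[ℝ] → ℍ[ℝ]) (Ω : Set ℍ[ℝ]) : Prop :=
  ContDiffOn ℝ 1 f Ω ∧ ∀ i ∈ Sph2, ∀ q ∈ Ω ∩ slicePlane i,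
    dbar i f q + (1 / 4 : ℝ) • ((v - i * v * i) * f q) = 0

/-- Axially symmetric slice domain. -/
def AxSymSliceDomain (Ω : Set ℍ[ℝ]) : Prop :=
  IsOpen Ω ∧ IsConnected Ω ∧ (∃ r : ℝ, (r : ℍ[ℝ]) ∈ Ω) ∧
  (∀ i ∈ Sph2, IsConnected (Ω ∩ slicePlane i)) ∧
  (∀ (x y : ℝ), ∀ i ∈ Sph2, (x : ℍ[ℝ]) + y • i ∈ Ω → ∀ j ∈ Sph2, (x : ℍ[ℝ]) + y • j ∈ Ω)


lemma qinner_eq (q v : ℍ[ℝ]) : qinner q v = (innerSL ℝ (v : ℍ[ℝ])) q := by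
  simp [qinner, Quaternion.inner_def, Quaternion.re_mul]
  ring

lemma exp_hasFDerivAt (v q : ℍ[ℝ]) :
    HasFDerivAt (fun q : ℍ[ℝ] => Real.exp (qinner q v))
      (Real.exp (qinner q v) • (innerSL ℝ v : ℍ[ℝ] →L[ℝ] ℝ)) q := by
  have h1 : HasFDerivAt (fun q : ℍ[ℝ] => (innerSL ℝ v) q) (innerSL ℝ v) q :=
    (innerSL ℝ v).hasFDerivAt
  have h2 := (Real.hasDerivAt_exp ((innerSL ℝ v) q)).comp_hasFDerivAt q h1
  simp only [← qinner_eq] at h2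
  exact h2.congr_of_eventuallyEq (by filter_upwards with x; simp [Function.comp, qinner_eq])

lemma sph2_sq {i : ℍ[ℝ]} (hi : i ∈ Sph2) : i.imI^2 + i.imJ^2 + i.imK^2 = 1 := by
  obtain ⟨h0, h1⟩ := hi
  have := Quaternion.normSq_eq_norm_mul_self (a := i)
  rw [Quaternion.normSq_def'] at this
  rw [h1] at this
  nlinarith [this, h0]

lemma quat_id (i v : ℍ[ℝ]) (h0 : i.re = 0) (h1 : i.imI^2 + i.imJ^2 + i.imK^2 = 1) :
    v - i * v * i = (2 * v.re : ℝ) • (1:ℍ[ℝ]) + (2 * qinner i v) • i := by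
  ext <;>
    simp [qinner, Quaternion.re_mul, Quaternion.imI_mul, Quaternion.imJ_mul,
      Quaternion.imK_mul, h0] <;>
    ring_nf <;>
    first
      | linear_combination v.re * h1
      | linear_combination (-v.imI) * h1
      | linear_combination (-v.imJ) * h1
      | linear_combination (-v.imK) * h1

lemma key_dbar (v i : ℍ[ℝ]) (hi : i ∈ Sph2) (f : ℍ[ℝ] → ℍ[ℝ]) (q : ℍ[ℝ])
    (hdf : DifferentiableAt ℝ f q) :
    dbar i (fun q => Real.exp (qinner q v) • f q) q
      = Real.exp (qinner q v) • (dbar i f q + (1/4:ℝ) • ((v - i*v*i) * f q)) := by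
  have hg : HasFDerivAt (fun q : ℍ[ℝ] => Real.exp (qinner q v) • f q)
      ((Real.exp (qinner q v)) • (fderiv ℝ f q)
        + (Real.exp (qinner q v) • (innerSL ℝ v : ℍ[ℝ] →L[ℝ] ℝ)).smulRight (f q)) q :=
    (exp_hasFDerivAt v q).smul hdf.hasFDerivAt
  have hL1 : (innerSL ℝ v) (1 : ℍ[ℝ]) = v.re := by
    rw [← qinner_eq]; simp [qinner]
  have hLi : (innerSL ℝ v) i = qinner i v := by
    rw [← qinner_eq]
  rw [quat_id i v hi.1 (sph2_sq hi)]
  simp only [dbar, hg.fderiv]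
  simp only [ContinuousLinearMap.add_apply, ContinuousLinearMap.smul_apply,
    ContinuousLinearMap.coe_smul', Pi.smul_apply, ContinuousLinearMap.smulRight_apply,
    hL1, hLi, add_mul, mul_add, mul_smul_comm, smul_mul_assoc, one_mul, smul_eq_mul]
  set E := Real.exp (qinner q v)
  set A := fderiv ℝ f q 1
  set B := fderiv ℝ f q i
  set c := qinner i v
  module

/-- a `C¹` function on an axially symmetric slice domain is `v`-slice
regular iff `q ↦ e^{⟨q,v⟩} f(q)` is slice regular. -/
theorem stmt7 (Ω : Set ℍ[ℝ]) (hΩ : AxSymSliceDomain Ω) (v : ℍ[ℝ])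
    (f : ℍ[ℝ] → ℍ[ℝ]) (hf : ContDiffOn ℝ 1 f Ω) :
    VSliceRegularOn v f Ω ↔
      SliceRegularOn (fun q => Real.exp (qinner q v) • f q) Ω := by
  have hopen : IsOpen Ω := hΩ.1
  have hdiff : ∀ q ∈ Ω, DifferentiableAt ℝ f q := fun q hq =>
    (hf.contDiffAt (hopen.mem_nhds hq)).differentiableAt one_ne_zero
  have hg_smooth : ContDiffOn ℝ 1 (fun q => Real.exp (qinner q v) • f q) Ω := by
    have h1 : ContDiff ℝ 1 (fun q : ℍ[ℝ] => Real.exp (qinner q v)) := by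
      simp only [qinner_eq]
      exact Real.contDiff_exp.comp (innerSL ℝ v).contDiff
    exact h1.contDiffOn.smul hf
  constructor
  · rintro ⟨-, h⟩
    refine ⟨hg_smooth, fun i hi q hq => ?_⟩
    rw [key_dbar v i hi f q (hdiff q hq.1), h i hi q hq, smul_zero]
  · rintro ⟨-, h⟩
    refine ⟨hf, fun i hi q hq => ?_⟩
    have h2 := h i hi q hq
    rw [key_dbar v i hi f q (hdiff q hq.1)] at h2
    exact (smul_eq_zero.mp h2).resolve_left (Real.exp_ne_zero _)
end
end

section
/- Splitting Lemma for v-slice regular functions: Let Ω ⊂ ℍ be an axially symmetric slice domain, v ∈ ℍ, and f ∈ 𝒮ℛ_v(Ω). For any i, j ∈ 𝕊² orthogonal to each other, there exist functions F, G : Ω_i → ℂ(i) satisfying ∂F/∂z̄_i + (1/4)(v - ivi)F = 0 and ∂G/∂z̄_i + (1/4)(v - ivi)G = 0 on Ω_i, such that f|_{Ω_i} = F + G·j on Ω_i. -/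
open Quaternion

noncomputable section

/-- Wirtinger-type operator on the slice parametrized by `(x,y) ↦ x + y i`. -/
def dbar2 (i : ℍ[ℝ]) (f : ℝ × ℝ → ℍ[ℝ]) (p : ℝ × ℝ) : ℍ[ℝ] :=
  (1 / 2 : ℝ) • (fderiv ℝ f p (1, 0) + i * fderiv ℝ f p (0, 1))

/-- Parameter domain of the slice `Ω_i = Ω ∩ ℂ(i)` in coordinates `(x,y)`. -/
def sliceParam (Ω : Set ℍ[ℝ]) (i : ℍ[ℝ]) : Set (ℝ × ℝ) :=
  {p | (p.1 : ℍ[ℝ]) + p.2 • i ∈ Ω}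

/-! ### Auxiliary lemmas -/

lemma aux_nsq (a : ℍ[ℝ]) (h : ‖a‖ = 1) : normSq a = 1 := by
  rw [Quaternion.normSq_eq_norm_mul_self, h]; ring

lemma aux_sq1 (i : ℍ[ℝ]) (h0 : i.re = 0) (h1 : normSq i = 1) : i * i = -1 := by
  rw [Quaternion.normSq_def'] at h1
  ext <;> simp [h0] <;> nlinarith [h1]

lemma aux_anti (i j : ℍ[ℝ]) (h0 : i.re = 0) (k0 : j.re = 0)
    (h : i.imI*j.imI + i.imJ*j.imJ + i.imK*j.imK = 0) : i * j = -(j * i) := by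
  ext <;> simp [h0, k0] <;> nlinarith [h]

lemma aux_comm_mem (i : ℍ[ℝ]) (h0 : i.re = 0) (h1 : normSq i = 1) (q : ℍ[ℝ])
    (hc : q * i = i * q) : q ∈ slicePlane i := by
  rw [Quaternion.normSq_def', h0] at h1
  refine ⟨q.re, q.imI*i.imI + q.imJ*i.imJ + q.imK*i.imK, ?_⟩
  have e1 := congrArg QuaternionAlgebra.imI hc
  have e2 := congrArg QuaternionAlgebra.imJ hc
  have e3 := congrArg QuaternionAlgebra.imK hc
  simp [h0] at e1 e2 e3
  have r1 : q.imJ * i.imK = q.imK * i.imJ := by linarith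
  have r2 : q.imK * i.imI = q.imI * i.imK := by linarith
  have r3 : q.imI * i.imJ = q.imJ * i.imI := by linarith
  ext
  · simp [h0]
  · simp [h0]; linear_combination (-q.imI)*h1 + i.imJ*r3 - i.imK*r2
  · simp [h0]; linear_combination (-q.imJ)*h1 - i.imI*r3 + i.imK*r1
  · simp [h0]; linear_combination (-q.imK)*h1 + i.imI*r2 - i.imJ*r1

set_option maxHeartbeats 1000000 in
/-- Splitting Lemma for `v`-slice regular functions: for orthogonal
`i, j ∈ 𝕊²` there are `ℂ(i)`-valued `C¹` solutions `F, G` of the Vekua equation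
`∂/∂z̄ + (1/4)(v - i v i)` on `Ω_i` with `f|_{Ω_i} = F + G j`. -/
theorem stmt8 (Ω : Set ℍ[ℝ]) (hΩ : AxSymSliceDomain Ω) (v : ℍ[ℝ])
    (f : ℍ[ℝ] → ℍ[ℝ]) (hf : VSliceRegularOn v f Ω)
    (i j : ℍ[ℝ]) (hi : i ∈ Sph2) (hj : j ∈ Sph2) (horth : qinner i j = 0) :
    ∃ F G : ℝ × ℝ → ℍ[ℝ],
      ContDiffOn ℝ 1 F (sliceParam Ω i) ∧ ContDiffOn ℝ 1 G (sliceParam Ω i) ∧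
      (∀ p ∈ sliceParam Ω i, F p ∈ slicePlane i ∧ G p ∈ slicePlane i) ∧
      (∀ p ∈ sliceParam Ω i,
        dbar2 i F p + (1 / 4 : ℝ) • ((v - i * v * i) * F p) = 0) ∧
      (∀ p ∈ sliceParam Ω i,
        dbar2 i G p + (1 / 4 : ℝ) • ((v - i * v * i) * G p) = 0) ∧
      (∀ p ∈ sliceParam Ω i, f ((p.1 : ℍ[ℝ]) + p.2 • i) = F p + G p * j) := by
  obtain ⟨hire, hinorm⟩ := hi
  obtain ⟨hjre, hjnorm⟩ := hj
  have hinsq : normSq i = 1 := aux_nsq i hinorm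
  have hjnsq : normSq j = 1 := aux_nsq j hjnorm
  have hii : i * i = -1 := aux_sq1 i hire hinsq
  have hjj : j * j = -1 := aux_sq1 j hjre hjnsq
  have hanti : i * j = -(j * i) :=
    aux_anti i j hire hjre (by simpa [qinner, hire, hjre] using horth)
  have hji : j * i = -(i * j) := by rw [hanti, neg_neg]
  set w : ℍ[ℝ] := v - i * v * i with hw
  have hwi : i * w = w * i := by
    have h1 : i * (i * v * i) = -(v * i) := by
      rw [show i * (i * v * i) = (i * i) * (v * i) by noncomm_ring, hii]; noncomm_ring
    have h2 : (i * v * i) * i = -(i * v) := by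
      rw [show (i * v * i) * i = (i * v) * (i * i) by noncomm_ring, hii]; noncomm_ring
    rw [hw, mul_sub, sub_mul, h1, h2]; noncomm_ring
  -- the continuous linear maps
  obtain ⟨φL, hφval⟩ : ∃ φL : ℝ × ℝ →L[ℝ] ℍ[ℝ],
      ∀ p : ℝ × ℝ, φL p = (p.1 : ℍ[ℝ]) + p.2 • i := by
    refine ⟨(ContinuousLinearMap.fst ℝ ℝ ℝ).smulRight (1 : ℍ[ℝ]) +
      (ContinuousLinearMap.snd ℝ ℝ ℝ).smulRight i, fun p => ?_⟩
    simp
    ext <;> simp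
  obtain ⟨L, hLval⟩ : ∃ L : ℍ[ℝ] →L[ℝ] ℍ[ℝ],
      ∀ a : ℍ[ℝ], L a = (1/2 : ℝ) • (a - i * (a * i)) := by
    refine ⟨(1/2 : ℝ) • (ContinuousLinearMap.id ℝ ℍ[ℝ] -
      (ContinuousLinearMap.mul ℝ ℍ[ℝ] i).comp ((ContinuousLinearMap.mul ℝ ℍ[ℝ]).flip i)),
      fun a => ?_⟩
    simp
  obtain ⟨M, hMval⟩ : ∃ M : ℍ[ℝ] →L[ℝ] ℍ[ℝ],
      ∀ a : ℍ[ℝ], M a = (-(1/2) : ℝ) • ((a + i * (a * i)) * j) := by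
    refine ⟨((ContinuousLinearMap.mul ℝ ℍ[ℝ]).flip j).comp
      ((-(1/2) : ℝ) • (ContinuousLinearMap.id ℝ ℍ[ℝ] +
        (ContinuousLinearMap.mul ℝ ℍ[ℝ] i).comp ((ContinuousLinearMap.mul ℝ ℍ[ℝ]).flip i))),
      fun a => ?_⟩
    simp [smul_mul_assoc]; rw [add_mul]; module
  -- key algebraic identities
  have Lkey1 : ∀ a : ℍ[ℝ], i * L a = L (i * a) := by
    intro a
    rw [hLval, hLval, mul_smul_comm]
    congr 1
    rw [mul_sub]
    congr 1
    noncomm_ring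
  have Lkey2 : ∀ a : ℍ[ℝ], w * L a = L (w * a) := by
    intro a
    rw [hLval, hLval, mul_smul_comm]
    congr 1
    rw [mul_sub]
    congr 1
    rw [show i * (w * a * i) = (i * w) * (a * i) by noncomm_ring, hwi]
    noncomm_ring
  have Mkey1 : ∀ a : ℍ[ℝ], i * M a = M (i * a) := by
    intro a
    rw [hMval, hMval, mul_smul_comm]
    congr 1
    rw [show i * ((a + i * (a * i)) * j) = (i * a + i * (i * (a * i))) * j by noncomm_ring]
    congr 2
    noncomm_ring
  have Mkey2 : ∀ a : ℍ[ℝ], w * M a = M (w * a) := by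
    intro a
    rw [hMval, hMval, mul_smul_comm]
    congr 1
    rw [show w * ((a + i * (a * i)) * j) = (w * a + w * (i * (a * i))) * j by noncomm_ring]
    congr 2
    rw [show i * (w * a * i) = (i * w) * (a * i) by noncomm_ring, hwi]
    noncomm_ring
  have Lcomm : ∀ a : ℍ[ℝ], L a * i = i * L a := by
    intro a
    rw [hLval, mul_smul_comm, smul_mul_assoc]
    congr 1
    have h1 : i * (a * i) * i = -(i * a) := by
      rw [show i * (a * i) * i = (i * a) * (i * i) by noncomm_ring, hii]; noncomm_ring
    have h2 : i * (i * (a * i)) = -(a * i) := by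
      rw [show i * (i * (a * i)) = (i * i) * (a * i) by noncomm_ring, hii]; noncomm_ring
    rw [sub_mul, mul_sub, h1, h2]
    noncomm_ring
  have Mcomm : ∀ a : ℍ[ℝ], M a * i = i * M a := by
    intro a
    rw [hMval, mul_smul_comm, smul_mul_assoc]
    congr 1
    have h1 : (a + i * (a * i)) * j * i = (a + i * (a * i)) * (-(i * j)) := by
      rw [mul_assoc, hji]
    have h2 : i * (i * (a * i)) = -(a * i) := by
      rw [show i * (i * (a * i)) = (i * i) * (a * i) by noncomm_ring, hii]; noncomm_ring
    rw [h1, show (a + i * (a * i)) * (-(i * j)) = -(((a + i * (a * i)) * i) * j) by noncomm_ring]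
    rw [show i * ((a + i * (a * i)) * j) = (i * a + i * (i * (a * i))) * j by noncomm_ring, h2]
    rw [show (a + i * (a * i)) * i = a * i + i * (a * i) * i by noncomm_ring]
    rw [show i * (a * i) * i = (i * a) * (i * i) by noncomm_ring, hii]
    noncomm_ring
  have split : ∀ a : ℍ[ℝ], L a + M a * j = a := by
    intro a
    rw [hLval, hMval, smul_mul_assoc, mul_assoc, hjj, mul_neg_one]
    match_scalars <;> ring
  -- the candidate functions
  refine ⟨fun p => L (f (φL p)), fun p => M (f (φL p)), ?_, ?_, ?_, ?_, ?_, ?_⟩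
  case _ =>
    exact L.contDiff.comp_contDiffOn
      (hf.1.comp φL.contDiff.contDiffOn (fun p hp => by rw [hφval]; exact hp))
  case _ =>
    exact M.contDiff.comp_contDiffOn
      (hf.1.comp φL.contDiff.contDiffOn (fun p hp => by rw [hφval]; exact hp))
  case _ =>
    intro p _
    exact ⟨aux_comm_mem i hire hinsq _ (Lcomm _),
      aux_comm_mem i hire hinsq _ (Mcomm _)⟩
  case _ =>
    intro p hp
    have hq : φL p ∈ Ω := by rw [hφval]; exact hp
    have hqs : φL p ∈ slicePlane i := ⟨p.1, p.2, hφval p⟩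
    have heq := hf.2 i ⟨hire, hinorm⟩ (φL p) ⟨hq, hqs⟩
    have hDf : DifferentiableAt ℝ f (φL p) :=
      (hf.1.contDiffAt (hΩ.1.mem_nhds hq)).differentiableAt one_ne_zero
    have hdF : HasFDerivAt (fun p => L (f (φL p)))
        ((L.comp (fderiv ℝ f (φL p))).comp φL) p :=
      L.hasFDerivAt.comp p ((hDf.hasFDerivAt.comp p φL.hasFDerivAt))
    have h10 : φL ((1 : ℝ), (0 : ℝ)) = 1 := by rw [hφval]; simp
    have h01 : φL ((0 : ℝ), (1 : ℝ)) = i := by rw [hφval]; simp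
    rw [dbar2, hdF.fderiv]
    simp only [ContinuousLinearMap.comp_apply, h10, h01]
    rw [Lkey1, Lkey2, ← map_add, ← map_smul, ← map_smul, ← map_add]
    rw [show (1/2 : ℝ) • (fderiv ℝ f (φL p) 1 + i * fderiv ℝ f (φL p) i) +
        (1/4 : ℝ) • (w * f (φL p)) = 0 from heq]
    exact map_zero L
  case _ =>
    intro p hp
    have hq : φL p ∈ Ω := by rw [hφval]; exact hp
    have hqs : φL p ∈ slicePlane i := ⟨p.1, p.2, hφval p⟩
    have heq := hf.2 i ⟨hire, hinorm⟩ (φL p) ⟨hq, hqs⟩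
    have hDf : DifferentiableAt ℝ f (φL p) :=
      (hf.1.contDiffAt (hΩ.1.mem_nhds hq)).differentiableAt one_ne_zero
    have hdF : HasFDerivAt (fun p => M (f (φL p)))
        ((M.comp (fderiv ℝ f (φL p))).comp φL) p :=
      M.hasFDerivAt.comp p ((hDf.hasFDerivAt.comp p φL.hasFDerivAt))
    have h10 : φL ((1 : ℝ), (0 : ℝ)) = 1 := by rw [hφval]; simp
    have h01 : φL ((0 : ℝ), (1 : ℝ)) = i := by rw [hφval]; simp
    rw [dbar2, hdF.fderiv]
    simp only [ContinuousLinearMap.comp_apply, h10, h01]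
    rw [Mkey1, Mkey2, ← map_add, ← map_smul, ← map_smul, ← map_add]
    rw [show (1/2 : ℝ) • (fderiv ℝ f (φL p) 1 + i * fderiv ℝ f (φL p) i) +
        (1/4 : ℝ) • (w * f (φL p)) = 0 from heq]
    exact map_zero M
  case _ =>
    intro p hp
    rw [← hφval p, split]
end
end

section
/- Liouville-type Theorem for v-slice regular functions: If f ∈ 𝒮ℛ_v(ℍ) and there exists M > 0 such that ‖f(q)‖ ≤ M e^{-⟨q,v⟩} for all q ∈ ℍ, then there exists a constant k ∈ ℍ such that f(q) = e^{-⟨q,v⟩} k for all q ∈ ℍ. -/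
open Quaternion

noncomputable section

namespace Stmt13Aux

/-! ### Algebraic lemmas -/

lemma sph2_normSq {i : ℍ[ℝ]} (hi : i ∈ Sph2) :
    i.imI ^ 2 + i.imJ ^ 2 + i.imK ^ 2 = 1 := by
  have h1 : Quaternion.normSq i = 1 := by
    rw [Quaternion.normSq_eq_norm_mul_self, hi.2]; ring
  rw [Quaternion.normSq_def', hi.1] at h1
  linarith

lemma sph2_mul_self {i : ℍ[ℝ]} (hi : i ∈ Sph2) : i * i = -1 := by
  have h := sph2_normSq hi
  have h0 := hi.1
  ext <;>
    simp [Quaternion.re_mul, Quaternion.imI_mul, Quaternion.imJ_mul, Quaternion.imK_mul, h0] <;>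
    nlinarith [h]

lemma key_identity {i : ℍ[ℝ]} (hi : i ∈ Sph2) (v : ℍ[ℝ]) :
    v - i * v * i = ((2 * v.re : ℝ) : ℍ[ℝ]) + (2 * qinner i v) • i := by
  have h := sph2_normSq hi
  have h0 := hi.1
  ext <;>
    simp [qinner, Quaternion.re_mul, Quaternion.imI_mul, Quaternion.imJ_mul,
      Quaternion.imK_mul, h0]
  · linear_combination v.re * h
  · linear_combination (-v.imI) * h
  · linear_combination (-v.imJ) * h
  · linear_combination (-v.imK) * h

lemma qinner_eq_inner (a b : ℍ[ℝ]) : qinner a b = (inner ℝ a b : ℝ) := by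
  simp [qinner, Quaternion.inner_def, Quaternion.re_mul]

lemma abs_qinner_le (a b : ℍ[ℝ]) : |qinner a b| ≤ ‖a‖ * ‖b‖ := by
  rw [qinner_eq_inner]
  exact abs_real_inner_le_norm a b

lemma qinner_one (v : ℍ[ℝ]) : qinner 1 v = v.re := by
  simp [qinner]

lemma qinner_neg_left (a b : ℍ[ℝ]) : qinner (-a) b = -(qinner a b) := by
  simp [qinner]; ring

/-! ### Continuous linear maps -/

/-- `qinner · v` as a continuous linear map. -/
def qinnerL (v : ℍ[ℝ]) : ℍ[ℝ] →L[ℝ] ℝ := LinearMap.toContinuousLinearMap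
  { toFun := fun q => qinner q v
    map_add' := by intro a b; simp [qinner]; ring
    map_smul' := by intro r a; simp [qinner]; ring }

@[simp] lemma qinnerL_apply (v q : ℍ[ℝ]) : qinnerL v q = qinner q v := rfl

/-- The embedding `ℂ → ℍ` along the slice of `i`. -/
def sliceL (i : ℍ[ℝ]) : ℂ →L[ℝ] ℍ[ℝ] := LinearMap.toContinuousLinearMap
  { toFun := fun z => ((z.re : ℝ) : ℍ[ℝ]) + z.im • i
    map_add' := by
      intro a b
      push_cast
      simp [add_smul]
      abel
    map_smul' := by
      intro r a
      ext <;>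
        simp [Complex.real_smul, Complex.mul_re, Complex.mul_im] <;> ring }

@[simp] lemma sliceL_apply (i : ℍ[ℝ]) (z : ℂ) :
    sliceL i z = ((z.re : ℝ) : ℍ[ℝ]) + z.im • i := rfl

lemma sliceL_one (i : ℍ[ℝ]) : sliceL i 1 = 1 := by simp

lemma sliceL_I (i : ℍ[ℝ]) : sliceL i Complex.I = i := by simp

lemma sliceL_zero (i : ℍ[ℝ]) : sliceL i 0 = 0 := by simp

lemma sliceL_mem_slicePlane (i : ℍ[ℝ]) (z : ℂ) : sliceL i z ∈ slicePlane i :=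
  ⟨z.re, z.im, rfl⟩

/-- The complex coordinate `u ↦ ⟨u,w⟩ - ⟨i u, w⟩ I`. -/
def phiL (i w : ℍ[ℝ]) : ℍ[ℝ] →L[ℝ] ℂ := LinearMap.toContinuousLinearMap
  { toFun := fun u => Complex.mk (qinner u w) (-(qinner (i * u) w))
    map_add' := by
      intro a b
      apply Complex.ext <;> simp [qinner, Quaternion.re_mul, Quaternion.imI_mul,
        Quaternion.imJ_mul, Quaternion.imK_mul, mul_add] <;> ring
    map_smul' := by
      intro r a
      apply Complex.ext <;> simp [qinner, Quaternion.re_mul, Quaternion.imI_mul,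
        Quaternion.imJ_mul, Quaternion.imK_mul, Complex.real_smul, Complex.mul_re,
        Complex.mul_im] <;> ring }

@[simp] lemma phiL_re (i w u : ℍ[ℝ]) : (phiL i w u).re = qinner u w := rfl
@[simp] lemma phiL_im (i w u : ℍ[ℝ]) : (phiL i w u).im = -(qinner (i * u) w) := rfl

lemma phiL_i_mul {i : ℍ[ℝ]} (hi : i ∈ Sph2) (w u : ℍ[ℝ]) :
    phiL i w (i * u) = Complex.I * phiL i w u := by
  have h2 : i * (i * u) = -u := by
    rw [← mul_assoc, sph2_mul_self hi, neg_one_mul]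
  apply Complex.ext <;>
    simp [Complex.mul_re, Complex.mul_im, h2, qinner_neg_left]

lemma norm_phiL_le {i : ℍ[ℝ]} (hi : i ∈ Sph2) (w u : ℍ[ℝ]) :
    ‖phiL i w u‖ ≤ 2 * (‖w‖ * ‖u‖) := by
  have h1 : ‖phiL i w u‖ ≤ |(phiL i w u).re| + |(phiL i w u).im| :=
    Complex.norm_le_abs_re_add_abs_im _
  have h2 : |qinner u w| ≤ ‖u‖ * ‖w‖ := abs_qinner_le u w
  have h3 : |qinner (i * u) w| ≤ ‖u‖ * ‖w‖ := by
    have := abs_qinner_le (i * u) w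
    rwa [norm_mul, hi.2, one_mul] at this
  rw [phiL_re, phiL_im, abs_neg] at h1
  calc ‖phiL i w u‖ ≤ |qinner u w| + |qinner (i * u) w| := h1
    _ ≤ 2 * (‖w‖ * ‖u‖) := by nlinarith [abs_nonneg (qinner u w)]

/-! ### The auxiliary function `g` -/

variable (v : ℍ[ℝ]) (f : ℍ[ℝ] → ℍ[ℝ])

/-- The function `g q = e^{⟨q,v⟩} f q`. -/
def gfun (q : ℍ[ℝ]) : ℍ[ℝ] := Real.exp (qinner q v) • f q

lemma hasFDerivAt_gfun (hd : Differentiable ℝ f) (q : ℍ[ℝ]) :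
    HasFDerivAt (gfun v f)
      (Real.exp (qinner q v) • fderiv ℝ f q
        + (Real.exp (qinner q v) • qinnerL v).smulRight (f q)) q := by
  have h1 : HasFDerivAt (fun q : ℍ[ℝ] => Real.exp (qinner q v))
      (Real.exp (qinner q v) • qinnerL v) q := by
    have := (qinnerL v).hasFDerivAt (x := q)
    exact this.exp
  exact h1.smul (hd q).hasFDerivAt

lemma differentiable_gfun (hd : Differentiable ℝ f) : Differentiable ℝ (gfun v f) :=
  fun q => (hasFDerivAt_gfun v f hd q).differentiableAt

lemma fderiv_gfun_apply (hd : Differentiable ℝ f) (q w : ℍ[ℝ]) :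
    fderiv ℝ (gfun v f) q w
      = Real.exp (qinner q v) • fderiv ℝ f q w
        + (Real.exp (qinner q v) * qinner w v) • f q := by
  rw [(hasFDerivAt_gfun v f hd q).fderiv]
  simp [mul_comm]

lemma dbar_gfun (hreg : VSliceRegularOn v f Set.univ) {i : ℍ[ℝ]} (hi : i ∈ Sph2)
    {q : ℍ[ℝ]} (hq : q ∈ slicePlane i) : dbar i (gfun v f) q = 0 := by
  have hd : Differentiable ℝ f := ((contDiffOn_univ).mp hreg.1).differentiable one_ne_zero
  have hfq := hreg.2 i hi q ⟨Set.mem_univ q, hq⟩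
  have e1 := fderiv_gfun_apply v f hd q 1
  have e2 := fderiv_gfun_apply v f hd q i
  rw [qinner_one] at e1
  have : dbar i (gfun v f) q
      = Real.exp (qinner q v) •
        (dbar i f q + (1 / 4 : ℝ) • ((v - i * v * i) * f q)) := by
    rw [key_identity hi v]
    unfold dbar
    rw [e1, e2]
    simp only [mul_add, add_mul, mul_smul_comm, smul_mul_assoc, Quaternion.coe_mul_eq_smul,
      smul_add, smul_smul]
    module
  rw [this, hfq, smul_zero]

lemma cr_of_dbar {h : ℍ[ℝ] → ℍ[ℝ]} {i q : ℍ[ℝ]} (hi : i ∈ Sph2)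
    (hz : dbar i h q = 0) : fderiv ℝ h q i = i * fderiv ℝ h q 1 := by
  unfold dbar at hz
  have h2 : fderiv ℝ h q 1 + i * fderiv ℝ h q i = 0 := by
    rcases smul_eq_zero.mp hz with h' | h'
    · norm_num at h'
    · exact h'
  have h3 := congrArg (fun x => i * x) h2
  simp only [mul_add, ← mul_assoc, sph2_mul_self hi, mul_zero] at h3
  rw [neg_one_mul] at h3
  have := add_eq_zero_iff_eq_neg.mp h3
  rw [this, neg_neg]

end Stmt13Aux

/-- Liouville-type theorem for `v`-slice regular functions. -/
theorem stmt13 (v : ℍ[ℝ]) (f : ℍ[ℝ] → ℍ[ℝ])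
    (hf : VSliceRegularOn v f Set.univ)
    (M : ℝ) (hM : 0 < M)
    (hb : ∀ q : ℍ[ℝ], ‖f q‖ ≤ M * Real.exp (-(qinner q v))) :
    ∃ k : ℍ[ℝ], ∀ q : ℍ[ℝ], f q = Real.exp (-(qinner q v)) • k := by
  classical
  open Stmt13Aux in
  set g := gfun v f with hg
  have hd : Differentiable ℝ f := ((contDiffOn_univ).mp hf.1).differentiable one_ne_zero
  have hgd : Differentiable ℝ g := differentiable_gfun v f hd
  -- bound on g
  have hgb : ∀ q, ‖g q‖ ≤ M := by
    intro q
    have : ‖g q‖ = Real.exp (qinner q v) * ‖f q‖ := by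
      rw [hg]
      unfold gfun
      rw [norm_smul, Real.norm_eq_abs, abs_of_pos (Real.exp_pos _)]
    rw [this]
    calc Real.exp (qinner q v) * ‖f q‖
        ≤ Real.exp (qinner q v) * (M * Real.exp (-(qinner q v))) := by
          exact mul_le_mul_of_nonneg_left (hb q) (Real.exp_pos _).le
      _ = M := by rw [Real.exp_neg]; field_simp
  -- g is constant
  have hconst : ∀ q : ℍ[ℝ], g q = g 0 := by
    intro q
    -- find a slice containing q
    obtain ⟨i, hi, y, hqi⟩ : ∃ i ∈ Sph2, ∃ y : ℝ, q = ((q.re : ℝ) : ℍ[ℝ]) + y • i := by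
      by_cases hp : q - ((q.re : ℝ) : ℍ[ℝ]) = 0
      · refine ⟨(show ℍ[ℝ] from ⟨0, 1, 0, 0⟩), ⟨rfl, ?_⟩, 0, by rw [sub_eq_zero] at hp; rw [zero_smul, add_zero]; exact hp⟩
        have h1 : Quaternion.normSq (show ℍ[ℝ] from ⟨0, 1, 0, 0⟩) = 1 := by
          rw [Quaternion.normSq_def']; norm_num
        rw [norm_eq_sqrt_real_inner, Quaternion.inner_self, h1, Real.sqrt_one]
      · set p := q - ((q.re : ℝ) : ℍ[ℝ]) with hpdef
        have hpre : p.re = 0 := by simp [hpdef]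
        have hpn : ‖p‖ ≠ 0 := norm_ne_zero_iff.mpr hp
        refine ⟨‖p‖⁻¹ • p, ⟨by simp [hpre], ?_⟩, ‖p‖, ?_⟩
        · rw [norm_smul, Real.norm_eq_abs, abs_inv, abs_norm]
          field_simp
        · rw [smul_smul, mul_inv_cancel₀ hpn, one_smul, hpdef]
          abel
    -- the holomorphic function on the slice
    have key : ∀ w : ℍ[ℝ], qinner (g q) w = qinner (g 0) w := by
      intro w
      set F : ℂ → ℂ := fun z => phiL i w (g (sliceL i z)) with hF
      have hFdiff : Differentiable ℂ F := by
        intro z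
        set c : ℂ := phiL i w (fderiv ℝ g (sliceL i z) 1) with hc
        have hL : HasFDerivAt F
            ((phiL i w).comp ((fderiv ℝ g (sliceL i z)).comp (sliceL i))) z := by
          exact (phiL i w).hasFDerivAt.comp z
            ((hgd (sliceL i z)).hasFDerivAt.comp z (sliceL i).hasFDerivAt)
        have hcr : fderiv ℝ g (sliceL i z) i = i * fderiv ℝ g (sliceL i z) 1 :=
          cr_of_dbar hi (dbar_gfun v f hf hi (sliceL_mem_slicePlane i z))
        have hrestrict :
            ((1 : ℂ →L[ℂ] ℂ).smulRight c).restrictScalars ℝ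
              = (phiL i w).comp ((fderiv ℝ g (sliceL i z)).comp (sliceL i)) := by
          apply ContinuousLinearMap.ext
          intro z'
          have hz' : sliceL i z' = (z'.re : ℝ) • (1 : ℍ[ℝ]) + z'.im • i := by
            rw [sliceL_apply, ← Quaternion.coe_one, Quaternion.smul_coe, mul_one]
          simp only [ContinuousLinearMap.coe_restrictScalars',
            ContinuousLinearMap.smulRight_apply, ContinuousLinearMap.one_apply,
            ContinuousLinearMap.coe_comp', Function.comp_apply]
          rw [hz', map_add, map_smul, map_smul, map_add, map_smul, map_smul, hcr,
            phiL_i_mul hi]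
          rw [smul_eq_mul, ← hc, Complex.real_smul, Complex.real_smul]
          apply Complex.ext <;>
            simp [Complex.mul_re, Complex.mul_im] <;> ring
        have : HasFDerivAt F ((1 : ℂ →L[ℂ] ℂ).smulRight c) z :=
          hasFDerivAt_of_restrictScalars ℝ hL hrestrict
        exact this.differentiableAt
      have hFbound : Bornology.IsBounded (Set.range F) := by
        rw [isBounded_iff_forall_norm_le]
        refine ⟨2 * (‖w‖ * M), ?_⟩
        rintro x ⟨z, rfl⟩
        calc ‖F z‖ ≤ 2 * (‖w‖ * ‖g (sliceL i z)‖) := norm_phiL_le hi w _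
          _ ≤ 2 * (‖w‖ * M) := by
              have := hgb (sliceL i z)
              nlinarith [norm_nonneg w, norm_nonneg (g (sliceL i z))]
      have hFz := hFdiff.apply_eq_apply_of_bounded hFbound ((q.re : ℂ) + y * Complex.I) 0
      have hsl : sliceL i ((q.re : ℂ) + y * Complex.I) = q := by
        rw [sliceL_apply]
        simp
        exact hqi.symm
      have hre := congrArg Complex.re hFz
      simpa only [hF, phiL_re, hsl, sliceL_zero] using hre
    -- conclude by taking coordinates
    have h1 := key 1
    have h2 := key ⟨0, 1, 0, 0⟩
    have h3 := key ⟨0, 0, 1, 0⟩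
    have h4 := key ⟨0, 0, 0, 1⟩
    simp [qinner] at h1 h2 h3 h4
    ext <;> assumption
  refine ⟨f 0, fun q => ?_⟩
  have h0 : g 0 = f 0 := by
    rw [hg]; unfold gfun
    simp [qinner]
  have hq := hconst q
  rw [h0, hg] at hq
  unfold gfun at hq
  have := congrArg (fun x => Real.exp (-(qinner q v)) • x) hq
  simpa [smul_smul, ← Real.exp_add] using this
end
end

section
/- Power series expansion for v-slice regular functions on the unit ball: If f ∈ 𝒮ℛ_v(𝔹⁴(0,1)) then there exists a sequence of quaternions (aₙ) such that f(q) = Σ_{n=0}^∞ Σ_{k=0}^n q^{n-k} (v q̄ + q v̄)^k · ((-1)^k a_{n-k})/(2^k k!) for all q in the open unit ball of ℍ. -/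
open Quaternion

noncomputable section

/-! ### Auxiliary material -/

open scoped NNReal ENNReal

namespace Stmt17

abbrev I0 : ℍ[ℝ] := ⟨0,1,0,0⟩
abbrev J0 : ℍ[ℝ] := ⟨0,0,1,0⟩

lemma norm_quat (u : ℍ[ℝ]) : ‖u‖ = Real.sqrt (u.re^2 + u.imI^2 + u.imJ^2 + u.imK^2) := by
  rw [← Quaternion.normSq_def', ← Real.sqrt_mul_self (norm_nonneg u),
    ← Quaternion.normSq_eq_norm_mul_self]

lemma sph2_sq {i : ℍ[ℝ]} (hi : i ∈ Sph2) : i.imI^2 + i.imJ^2 + i.imK^2 = 1 := by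
  obtain ⟨h0, h1⟩ := hi
  rw [norm_quat, h0] at h1
  have := Real.sqrt_eq_one.mp (by simpa using h1)
  linarith

lemma sph2_mul_self {i : ℍ[ℝ]} (hi : i ∈ Sph2) : i * i = -1 := by
  have h1 := sph2_sq hi
  have h0 := hi.1
  ext <;> simp [Quaternion.re_mul, Quaternion.imI_mul, Quaternion.imJ_mul, Quaternion.imK_mul, h0] <;>
    nlinarith [h1]

lemma key1 {i : ℍ[ℝ]} (hi : i ∈ Sph2) (u : ℍ[ℝ]) :
    u - i * u * i = ((2*u.re : ℝ) : ℍ[ℝ]) + (2 * qinner i u) • i := by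
  have h1 := sph2_sq hi; have h0 := hi.1
  ext <;> simp [Quaternion.re_mul, Quaternion.imI_mul, Quaternion.imJ_mul, Quaternion.imK_mul, h0, qinner]
  · linear_combination u.re * h1
  · linear_combination -u.imI * h1
  · linear_combination -u.imJ * h1
  · linear_combination -u.imK * h1

lemma key2 (q v : ℍ[ℝ]) : v * star q + q * star v = ((2 * qinner q v : ℝ) : ℍ[ℝ]) := by
  ext <;> simp [Quaternion.re_mul, Quaternion.imI_mul, Quaternion.imJ_mul, Quaternion.imK_mul, qinner] <;> ring

def qinnerL (v : ℍ[ℝ]) : ℍ[ℝ] →L[ℝ] ℝ :=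
  LinearMap.toContinuousLinearMap
  { toFun := fun q => qinner q v
    map_add' := fun a b => by simp [qinner]; ring
    map_smul' := fun c a => by simp [qinner]; ring }

lemma qinnerL_apply (v q : ℍ[ℝ]) : qinnerL v q = qinner q v := rfl

lemma qinner_one (v : ℍ[ℝ]) : qinner 1 v = v.re := by simp [qinner]

lemma exists_rot {i : ℍ[ℝ]} (hi : i ∈ Sph2) : ∃ w : ℍ[ℝ], w ≠ 0 ∧ i * w = w * I0 := by
  by_cases hneg : i = -I0
  · refine ⟨J0, ?_, ?_⟩
    · intro h; exact absurd (congrArg QuaternionAlgebra.imJ h) (by norm_num)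
    · subst hneg; ext <;> simp
  · refine ⟨1 - i * I0, ?_, ?_⟩
    · intro h
      have h2 : i * I0 = 1 := (sub_eq_zero.mp h).symm
      have h4 : i * (I0 * I0) = I0 := by rw [← mul_assoc, h2, one_mul]
      rw [show I0 * I0 = (-1 : ℍ[ℝ]) by ext <;> simp, mul_neg_one] at h4
      exact hneg (by rw [← h4, neg_neg])
    · have h2 : i * i = -1 := sph2_mul_self hi
      have h3 : I0 * I0 = -1 := by ext <;> simp
      calc i * (1 - i * I0) = i - (i*i) * I0 := by noncomm_ring
        _ = i + I0 := by rw [h2]; noncomm_ring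
        _ = I0 - i * (I0 * I0) := by rw [h3]; noncomm_ring
        _ = (1 - i * I0) * I0 := by noncomm_ring

lemma exists_slice (q : ℍ[ℝ]) : ∃ i ∈ Sph2, ∃ z : ℂ,
    (z.re : ℍ[ℝ]) + z.im • i = q ∧ ‖z‖ = ‖q‖ := by
  set m := Real.sqrt (q.imI^2 + q.imJ^2 + q.imK^2) with hm
  have hmsq : m^2 = q.imI^2 + q.imJ^2 + q.imK^2 := Real.sq_sqrt (by positivity)
  have hm0 : 0 ≤ m := Real.sqrt_nonneg _
  by_cases h : m = 0
  · have h1 : q.imI = 0 ∧ q.imJ = 0 ∧ q.imK = 0 := by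
      rw [h] at hmsq; refine ⟨?_, ?_, ?_⟩ <;> nlinarith
    refine ⟨I0, ⟨rfl, by rw [norm_quat]; norm_num⟩, ⟨q.re, 0⟩, ?_, ?_⟩
    · ext <;> simp [h1.1, h1.2.1, h1.2.2]
    · rw [norm_quat, h1.1, h1.2.1, h1.2.2]
      simp only [Complex.norm_def, Complex.normSq_apply]
      norm_num [sq]
  · refine ⟨⟨0, q.imI/m, q.imJ/m, q.imK/m⟩, ⟨rfl, ?_⟩, ⟨q.re, m⟩, ?_, ?_⟩
    · erw [norm_quat]
      simp only []
      rw [show (0:ℝ)^2 + (q.imI/m)^2 + (q.imJ/m)^2 + (q.imK/m)^2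
          = (q.imI^2+q.imJ^2+q.imK^2)/m^2 by ring]
      rw [← hmsq, div_self (by positivity), Real.sqrt_one]
    · ext <;> simp <;> change m * _ = _ <;> simp [h] <;> field_simp
    · simp [Complex.norm_def, Complex.normSq_apply, norm_quat]
      rw [show q.re*q.re + m*m = q.re^2 + q.imI^2 + q.imJ^2 + q.imK^2 by linear_combination hmsq]

/-- the exponential twist of a `v`-slice regular function is slice regular -/
lemma gReg (v : ℍ[ℝ]) (f : ℍ[ℝ] → ℍ[ℝ]) (hf : VSliceRegularOn v f (Metric.ball 0 1)) :
    ContDiffOn ℝ 1 (fun q => Real.exp (qinner q v) • f q) (Metric.ball 0 1) ∧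
    ∀ i ∈ Sph2, ∀ q ∈ Metric.ball (0:ℍ[ℝ]) 1 ∩ slicePlane i,
      dbar i (fun q => Real.exp (qinner q v) • f q) q = 0 := by
  constructor
  · exact ((Real.contDiff_exp.comp (qinnerL v).contDiff).contDiffOn.smul hf.1)
  · intro i hi q hq
    have hfd : HasFDerivAt f (fderiv ℝ f q) q := by
      have := (hf.1.differentiableOn one_ne_zero).differentiableAt
        (Metric.isOpen_ball.mem_nhds hq.1)
      exact this.hasFDerivAt
    set F' := fderiv ℝ f q
    have hexp : HasFDerivAt (fun q : ℍ[ℝ] => Real.exp (qinnerL v q))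
        (Real.exp (qinnerL v q) • (qinnerL v : ℍ[ℝ] →L[ℝ] ℝ)) q :=
      ((qinnerL v).hasFDerivAt).exp
    have hg : HasFDerivAt (fun q => Real.exp (qinner q v) • f q)
        (Real.exp (qinner q v) • F' + (Real.exp (qinner q v) • (qinnerL v)).smulRight (f q)) q :=
      hexp.smul hfd
    set e := Real.exp (qinner q v)
    have hD : fderiv ℝ (fun q => Real.exp (qinner q v) • f q) q
        = e • F' + (e • (qinnerL v)).smulRight (f q) := hg.fderiv
    have hCR := hf.2 i hi q hq
    rw [dbar, hD]
    have he1 : (e • F' + (e • (qinnerL v)).smulRight (f q)) 1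
        = e • F' 1 + (e * v.re) • f q := by
      simp [ContinuousLinearMap.smulRight_apply, qinnerL_apply, qinner_one, smul_smul]
    have he2 : (e • F' + (e • (qinnerL v)).smulRight (f q)) i
        = e • F' i + (e * qinner i v) • f q := by
      simp [ContinuousLinearMap.smulRight_apply, qinnerL_apply, smul_smul]
    rw [he1, he2]
    have hstep : (1/2 : ℝ) • (e • F' 1 + (e * v.re) • f q + i * (e • F' i + (e * qinner i v) • f q))
        = e • (dbar i f q + (1/4 : ℝ) • ((v - i * v * i) * f q)) := by
      rw [key1 hi v, dbar]
      rw [add_mul, Quaternion.coe_mul_eq_smul, smul_mul_assoc]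
      rw [mul_add, mul_smul_comm e i (F' i), mul_smul_comm (e * qinner i v) i (f q)]
      module
    rw [hstep, hCR, smul_zero]

/-! ### The standard slice -/

def P1 : ℍ[ℝ] →L[ℝ] ℂ := LinearMap.toContinuousLinearMap {
  toFun := fun u => ⟨u.re, u.imI⟩
  map_add' := fun a b => by simp [Complex.ext_iff]
  map_smul' := fun c a => by simp [Complex.ext_iff] }

def P2 : ℍ[ℝ] →L[ℝ] ℂ := LinearMap.toContinuousLinearMap {
  toFun := fun u => ⟨u.imJ, u.imK⟩
  map_add' := fun a b => by simp [Complex.ext_iff]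
  map_smul' := fun c a => by simp [Complex.ext_iff] }

lemma I0_mul_I0 : I0 * I0 = -1 := by ext <;> simp

def iota : ℂ →ₐ[ℝ] ℍ[ℝ] := Complex.liftAux I0 I0_mul_I0

lemma iota_apply (z : ℂ) : iota z = ⟨z.re, z.im, 0, 0⟩ := by
  show Complex.liftAux _ _ _ = _
  rw [Complex.liftAux_apply]; ext <;> simp

def iotaC : ℂ →L[ℝ] ℍ[ℝ] := LinearMap.toContinuousLinearMap iota.toLinearMap

lemma iotaC_apply (z : ℂ) : iotaC z = iota z := rfl

lemma norm_iota (z : ℂ) : ‖iota z‖ = ‖z‖ := by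
  rw [iota_apply]; erw [norm_quat]; rw [Complex.norm_def, Complex.normSq_apply]; ring_nf

lemma decomp (u : ℍ[ℝ]) : iota (P1 u) + iota (P2 u) * J0 = u := by
  show iota ⟨u.re, u.imI⟩ + iota ⟨u.imJ, u.imK⟩ * J0 = u
  ext <;> simp only [Quaternion.re_add, Quaternion.imI_add, Quaternion.imJ_add, Quaternion.imK_add, Quaternion.re_mul, Quaternion.imI_mul, Quaternion.imJ_mul, Quaternion.imK_mul] <;> simp [iota_apply]

lemma P1_I_mul (u : ℍ[ℝ]) : P1 (I0 * u) = Complex.I * P1 u := by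
  show (⟨(I0 * u).re, (I0 * u).imI⟩ : ℂ) = Complex.I * ⟨u.re, u.imI⟩
  simp [P1, Complex.ext_iff, Quaternion.re_mul, Quaternion.imI_mul]

lemma P2_I_mul (u : ℍ[ℝ]) : P2 (I0 * u) = Complex.I * P2 u := by
  show (⟨(I0 * u).imJ, (I0 * u).imK⟩ : ℂ) = Complex.I * ⟨u.imJ, u.imK⟩
  simp [P2, Complex.ext_iff, Quaternion.imJ_mul, Quaternion.imK_mul]

lemma iota_mem_slice (z : ℂ) : iota z ∈ slicePlane I0 :=
  ⟨z.re, z.im, by ext <;> simp [iota_apply]⟩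

lemma iota_real (x : ℝ) : iota ((x : ℝ) : ℂ) = ((x : ℝ) : ℍ[ℝ]) := by
  rw [iota_apply]; ext <;> simp

lemma norm_J0 : ‖J0‖ = 1 := by rw [norm_quat]; norm_num

lemma I0_mem_Sph2 : I0 ∈ Sph2 := ⟨rfl, by rw [norm_quat]; norm_num⟩

/-- complex differentiability of the two components of the standard slice restriction -/
lemma slice_diff {G : ℍ[ℝ] → ℍ[ℝ]} (h1 : ContDiffOn ℝ 1 G (Metric.ball 0 1))
    (h2 : ∀ q ∈ Metric.ball (0:ℍ[ℝ]) 1 ∩ slicePlane I0, dbar I0 G q = 0)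
    (P : ℍ[ℝ] →L[ℝ] ℂ) (hP : ∀ u, P (I0 * u) = Complex.I * P u)
    {z : ℂ} (hz : ‖z‖ < 1) :
    DifferentiableAt ℂ (fun z => P (G (iotaC z))) z := by
  set q := iota z with hq
  have hqb : q ∈ Metric.ball (0:ℍ[ℝ]) 1 := by
    simp only [Metric.mem_ball, dist_zero_right]
    rw [norm_iota]; exact hz
  have hGd : HasFDerivAt G (fderiv ℝ G q) q :=
    ((h1.differentiableOn one_ne_zero).differentiableAt (Metric.isOpen_ball.mem_nhds hqb)).hasFDerivAt
  set G' := fderiv ℝ G q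
  have hCR : G' 1 + I0 * G' I0 = 0 := by
    have := h2 q ⟨hqb, iota_mem_slice z⟩
    rw [dbar] at this
    have h12 : (1/2 : ℝ) ≠ 0 := by norm_num
    exact (smul_eq_zero.mp this).resolve_left h12
  have hCR2 : G' I0 = I0 * G' 1 := by
    rw [eq_neg_of_add_eq_zero_left hCR]
    rw [mul_neg, ← mul_assoc, I0_mul_I0, neg_mul, one_mul, neg_neg]
  -- real derivative of the composite
  have hM : HasFDerivAt (fun z => P (G (iotaC z))) ((P.comp G').comp iotaC) z := by
    have := (P.hasFDerivAt.comp q hGd).comp z (iotaC.hasFDerivAt (x := z))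
    exact this
  set M := (P.comp G').comp iotaC
  -- M is complex linear
  have hM1 : M 1 = P (G' 1) := by
    have : iotaC 1 = 1 := by rw [iotaC_apply]; rw [map_one]
    simp only [M, ContinuousLinearMap.comp_apply, this]
  have hMI : M Complex.I = Complex.I * P (G' 1) := by
    have : iotaC Complex.I = I0 := by rw [iotaC_apply, iota_apply]; ext <;> simp
    simp only [M, ContinuousLinearMap.comp_apply, this, hCR2, hP]
  set c := P (G' 1)
  have hlin : ∀ u : ℂ, M u = c * u := by
    intro u
    have hu : u = u.re • (1:ℂ) + u.im • Complex.I := by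
      simp [Complex.ext_iff]
    calc M u = M (u.re • (1:ℂ) + u.im • Complex.I) := by rw [← hu]
      _ = u.re • M 1 + u.im • M Complex.I := by rw [map_add, map_smul, map_smul]
      _ = c * u := by
          rw [hM1, hMI, Complex.real_smul, Complex.real_smul]
          conv_rhs => rw [← Complex.re_add_im u]
          ring
  refine ⟨c • (ContinuousLinearMap.id ℂ ℂ), ?_⟩
  apply hasFDerivAt_of_restrictScalars (h := hM)
  ext u
  simp [hlin u, mul_comm]

lemma core {G : ℍ[ℝ] → ℍ[ℝ]} (h1 : ContDiffOn ℝ 1 G (Metric.ball 0 1))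
    (h2 : ∀ q ∈ Metric.ball (0:ℍ[ℝ]) 1 ∩ slicePlane I0, dbar I0 G q = 0) :
    ∃ b : ℕ → ℍ[ℝ],
      (∀ z : ℂ, ‖z‖ < 1 → HasSum (fun n => (iota z)^n * b n) (G (iota z))) ∧
      (∀ r : ℝ, 0 ≤ r → r < 1 → Summable (fun n => ‖b n‖ * r^n)) ∧
      HasFPowerSeriesAt (fun x : ℝ => G ((x : ℝ) : ℍ[ℝ]))
        (fun n => ContinuousMultilinearMap.mkPiRing ℝ (Fin n) (b n)) 0 := by
  have KEY : ∀ (P : ℍ[ℝ] →L[ℝ] ℂ), (∀ u, P (I0*u) = Complex.I * P u) →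
      ∀ (R : ℝ≥0), 0 < R → (R:ℝ) < 1 →
      HasFPowerSeriesOnBall (fun z => P (G (iotaC z)))
        (cauchyPowerSeries (fun z => P (G (iotaC z))) 0 (1/2)) 0 R := by
    intro P hP R hR0 hR1
    have hd : ∀ (S : ℝ≥0), (S:ℝ) < 1 →
        DifferentiableOn ℂ (fun z => P (G (iotaC z))) (Metric.closedBall (0:ℂ) S) := by
      intro S hS1 z hz
      have : ‖z‖ < 1 := by
        have := mem_closedBall_zero_iff.mp hz
        calc ‖z‖ = ‖z‖ := rfl
          _ ≤ (S:ℝ) := this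
          _ < 1 := hS1
      exact (slice_diff h1 h2 P hP this).differentiableWithinAt
    have h := (hd R hR1).hasFPowerSeriesOnBall hR0
    have h' := (hd (1/2) (by norm_num)).hasFPowerSeriesOnBall (by norm_num)
    rwa [h.hasFPowerSeriesAt.eq_formalMultilinearSeries h'.hasFPowerSeriesAt] at h
  set H1 := fun z => P1 (G (iotaC z)) with hH1
  set H2 := fun z => P2 (G (iotaC z)) with hH2
  set p1 := cauchyPowerSeries H1 0 (1/2) with hp1
  set p2 := cauchyPowerSeries H2 0 (1/2) with hp2
  set b : ℕ → ℍ[ℝ] := fun n => iota (p1.coeff n) + iota (p2.coeff n) * J0 with hbdef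
  have HS : ∀ z : ℂ, ‖z‖ < 1 → HasSum (fun n => (iota z)^n * b n) (G (iota z)) := by
    intro z hz
    set Rr : ℝ := (‖z‖ + 1)/2 with hRr
    have hRr0 : 0 < Rr := by positivity
    have habsR : ‖z‖ < Rr := by
      rw [hRr]; linarith
    have hRr1 : Rr < 1 := by rw [hRr]; linarith
    set R : ℝ≥0 := ⟨Rr, hRr0.le⟩ with hR
    have hb1 := KEY P1 P1_I_mul R hRr0 hRr1
    have hb2 := KEY P2 P2_I_mul R hRr0 hRr1
    have hz' : z ∈ Metric.eball (0:ℂ) (R:ℝ≥0∞) := by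
      rw [mem_emetric_ball_zero_iff, enorm_eq_nnnorm, ENNReal.coe_lt_coe, ← NNReal.coe_lt_coe]
      exact habsR
    have hs1 := hb1.hasSum hz'
    have hs2 := hb2.hasSum hz'
    simp only [FormalMultilinearSeries.apply_eq_pow_smul_coeff, zero_add, smul_eq_mul] at hs1 hs2
    have hs1' := iotaC.hasSum hs1
    have hs2' := (iotaC.hasSum hs2).mul_right J0
    have hsum := hs1'.add hs2'
    have hterm : (fun n => iotaC (z ^ n * p1.coeff n) + iotaC (z ^ n * p2.coeff n) * J0)
        = fun n => (iota z)^n * (iota (p1.coeff n) + iota (p2.coeff n) * J0) := by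
      funext n
      simp only [iotaC_apply, map_mul, map_pow]
      noncomm_ring
    rw [hterm] at hsum
    have hval : iotaC (H1 z) + iotaC (H2 z) * J0 = G (iota z) := by
      simp only [hH1, hH2, iotaC_apply]
      exact decomp _
    rwa [hval] at hsum
  have SUM : ∀ r : ℝ, 0 ≤ r → r < 1 → Summable (fun n => ‖b n‖ * r^n) := by
    intro r hr0 hr1
    set R : ℝ≥0 := ⟨(r+1)/2, by positivity⟩ with hR
    have hR0 : 0 < R := by
      rw [← NNReal.coe_lt_coe]; show (0:ℝ) < (r+1)/2; linarith
    have hR1 : (R:ℝ) < 1 := by show (r+1)/2 < 1; linarith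
    have hb1 := KEY P1 P1_I_mul R hR0 hR1
    have hb2 := KEY P2 P2_I_mul R hR0 hR1
    set r' : ℝ≥0 := ⟨r, hr0⟩ with hr'
    have hrR : (r' : ℝ≥0∞) < (R : ℝ≥0∞) := by
      rw [ENNReal.coe_lt_coe, ← NNReal.coe_lt_coe]
      show r < (r+1)/2; linarith
    have S1 := p1.summable_norm_mul_pow (lt_of_lt_of_le hrR hb1.r_le)
    have S2 := p2.summable_norm_mul_pow (lt_of_lt_of_le hrR hb2.r_le)
    have hrc : (r' : ℝ) = r := rfl
    rw [hrc] at S1 S2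
    refine Summable.of_nonneg_of_le (fun n => by positivity) (fun n => ?_) (S1.add S2)
    have hbn : ‖iota (p1.coeff n) + iota (p2.coeff n) * J0‖ ≤ ‖p1 n‖ + ‖p2 n‖ := by
      refine (norm_add_le _ _).trans ?_
      rw [norm_mul, norm_J0, mul_one, norm_iota, norm_iota,
        p1.norm_apply_eq_norm_coef, p2.norm_apply_eq_norm_coef]
    calc ‖iota (p1.coeff n) + iota (p2.coeff n) * J0‖ * r ^ n
        ≤ (‖p1 n‖ + ‖p2 n‖) * r ^ n :=
          mul_le_mul_of_nonneg_right hbn (by positivity)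
      _ = ‖p1 n‖ * r ^ n + ‖p2 n‖ * r ^ n := by ring
  refine ⟨b, HS, SUM, ?_⟩
  refine ⟨((1/2 : ℝ≥0) : ℝ≥0∞), ?_, ?_, ?_⟩
  · have hs := SUM (1/2) (by norm_num) (by norm_num)
    have : Summable fun n => ‖ContinuousMultilinearMap.mkPiRing ℝ (Fin n) (b n)‖ * ((1/2:ℝ≥0):ℝ)^n := by
      simpa [ContinuousMultilinearMap.norm_mkPiRing] using hs
    exact FormalMultilinearSeries.le_radius_of_summable_norm _ this
  · exact ENNReal.coe_pos.mpr (by norm_num)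
  · intro y hy
    have hy' : |y| < 1/2 := by
      rw [mem_emetric_ball_zero_iff, enorm_eq_nnnorm, ENNReal.coe_lt_coe, ← NNReal.coe_lt_coe] at hy
      simpa [Real.norm_eq_abs] using hy
    have h := HS ((y : ℝ) : ℂ) (by rw [Complex.norm_real, Real.norm_eq_abs]; linarith [abs_nonneg y])
    rw [iota_real] at h
    have hterm : (fun n => ((y:ℍ[ℝ]))^n * b n) = fun n =>
        (ContinuousMultilinearMap.mkPiRing ℝ (Fin n) (b n)) fun _ => y := by
      funext n
      rw [ContinuousMultilinearMap.mkPiRing_apply]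
      rw [← Quaternion.coe_pow, Quaternion.coe_mul_eq_smul]
      simp
    rw [hterm] at h
    simpa using h

def mulL (a : ℍ[ℝ]) : ℍ[ℝ] →L[ℝ] ℍ[ℝ] := LinearMap.toContinuousLinearMap (LinearMap.mulLeft ℝ a)
def conjL (w : ℍ[ℝ]) : ℍ[ℝ] →L[ℝ] ℍ[ℝ] :=
  LinearMap.toContinuousLinearMap ((LinearMap.mulRight ℝ w⁻¹).comp (LinearMap.mulLeft ℝ w))

lemma mulL_apply (a q : ℍ[ℝ]) : mulL a q = a * q := rfl
lemma conjL_apply (w q : ℍ[ℝ]) : conjL w q = w * q * w⁻¹ := rfl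

lemma norm_conj (w : ℍ[ℝ]) (hw : w ≠ 0) (q : ℍ[ℝ]) : ‖w * q * w⁻¹‖ = ‖q‖ := by
  rw [norm_mul, norm_mul, norm_inv]
  have : ‖w‖ ≠ 0 := norm_ne_zero_iff.mpr hw
  field_simp

lemma transfer {g : ℍ[ℝ] → ℍ[ℝ]} (hg1 : ContDiffOn ℝ 1 g (Metric.ball 0 1))
    (hg2 : ∀ i ∈ Sph2, ∀ q ∈ Metric.ball (0:ℍ[ℝ]) 1 ∩ slicePlane i, dbar i g q = 0)
    {i w : ℍ[ℝ]} (hi : i ∈ Sph2) (hw : w ≠ 0) (hrel : i * w = w * I0) :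
    ContDiffOn ℝ 1 (fun q => w⁻¹ * g (w * q * w⁻¹)) (Metric.ball 0 1) ∧
    ∀ q ∈ Metric.ball (0:ℍ[ℝ]) 1 ∩ slicePlane I0,
      dbar I0 (fun q => w⁻¹ * g (w * q * w⁻¹)) q = 0 := by
  have hwI : w * I0 * w⁻¹ = i := by
    rw [← hrel, mul_assoc, mul_inv_cancel₀ hw, mul_one]
  have hmaps : Set.MapsTo (fun q => w * q * w⁻¹) (Metric.ball (0:ℍ[ℝ]) 1) (Metric.ball 0 1) := by
    intro q hq
    simp only [Metric.mem_ball, dist_zero_right] at hq ⊢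
    rwa [norm_conj w hw]
  constructor
  · have hcomp : ContDiffOn ℝ 1 (fun q => g (conjL w q)) (Metric.ball 0 1) := by
      apply hg1.comp ((conjL w).contDiff.contDiffOn)
      intro q hq; exact hmaps hq
    have := ((mulL w⁻¹).contDiff.comp_contDiffOn hcomp)
    simpa only [Function.comp_def, mulL_apply, conjL_apply] using this
  · rintro q ⟨hqb, x, y, hxy⟩
    set Q := w * q * w⁻¹ with hQ
    have hQb : Q ∈ Metric.ball (0:ℍ[ℝ]) 1 := hmaps hqb
    have hQs : Q ∈ slicePlane i := by
      refine ⟨x, y, ?_⟩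
      rw [hQ, hxy, mul_add, add_mul, mul_smul_comm, smul_mul_assoc, hwI]
      congr 1
      rw [← Quaternion.coe_commutes, mul_assoc, mul_inv_cancel₀ hw, mul_one]
    set G' := fderiv ℝ g Q with hG'
    have hgd : HasFDerivAt g G' Q :=
      ((hg1.differentiableOn one_ne_zero).differentiableAt (Metric.isOpen_ball.mem_nhds hQb)).hasFDerivAt
    have hGd : HasFDerivAt (fun q => w⁻¹ * g (w * q * w⁻¹))
        ((mulL w⁻¹).comp (G'.comp (conjL w))) q := by
      have h1 := (mulL w⁻¹).hasFDerivAt (x := g Q)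
      have h2 := h1.comp Q hgd
      have h3 := h2.comp q ((conjL w).hasFDerivAt (x := q))
      exact h3
    have hinv : w⁻¹ * i = I0 * w⁻¹ := by
      have h := congrArg (fun x => w⁻¹ * x * w⁻¹) hrel
      simp only [← mul_assoc, inv_mul_cancel₀ hw, one_mul] at h
      rwa [mul_assoc, mul_inv_cancel₀ hw, mul_one] at h
    rw [dbar, hGd.fderiv]
    have e1 : ((mulL w⁻¹).comp (G'.comp (conjL w))) 1 = w⁻¹ * G' 1 := by
      simp only [ContinuousLinearMap.comp_apply, conjL_apply, mulL_apply, mul_one,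
        mul_inv_cancel₀ hw, map_one]
    have e2 : ((mulL w⁻¹).comp (G'.comp (conjL w))) I0 = w⁻¹ * G' i := by
      simp only [ContinuousLinearMap.comp_apply, conjL_apply, mulL_apply, hwI]
    rw [e1, e2]
    have e3 : I0 * (w⁻¹ * G' i) = w⁻¹ * (i * G' i) := by
      rw [← mul_assoc, ← hinv, mul_assoc]
    rw [e3, ← mul_add, ← mul_smul_comm]
    have := hg2 i hi Q ⟨hQb, hQs⟩
    rw [dbar, ← hG'] at this
    rw [this, mul_zero]

end Stmt17


open Stmt17 in
/-- power series expansion on the unit ball for `v`-slice regular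
functions. -/
theorem stmt17 (v : ℍ[ℝ]) (f : ℍ[ℝ] → ℍ[ℝ])
    (hf : VSliceRegularOn v f (Metric.ball (0 : ℍ[ℝ]) 1)) :
    ∃ a : ℕ → ℍ[ℝ], ∀ q ∈ Metric.ball (0 : ℍ[ℝ]) 1,
      f q = ∑' n : ℕ, ∑ k ∈ Finset.range (n + 1),
        q ^ (n - k) * (v * star q + q * star v) ^ k *
          (((-1 : ℝ) ^ k / (2 ^ k * (Nat.factorial k))) • a (n - k)) := by
  obtain ⟨hg1, hg2⟩ := gReg v f hf
  set g : ℍ[ℝ] → ℍ[ℝ] := fun q => Real.exp (qinner q v) • f q with hgdef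
  obtain ⟨a, HSa, SUMa, HPa⟩ := core hg1 (hg2 I0 I0_mem_Sph2)
  refine ⟨a, ?_⟩
  intro q hq
  have hqn : ‖q‖ < 1 := by simpa [Metric.mem_ball, dist_zero_right] using hq
  -- Step 1 : `HasSum (fun n => q ^ n * a n) (g q)`
  have HSq : HasSum (fun n => q ^ n * a n) (g q) := by
    obtain ⟨i, hi, z, hziq, hzabs⟩ := exists_slice q
    obtain ⟨w, hw, hrel⟩ := exists_rot hi
    obtain ⟨hG1, hG2⟩ := transfer hg1 hg2 hi hw hrel
    obtain ⟨b, HSb, SUMb, HPb⟩ := core hG1 hG2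
    have hwI : w * I0 * w⁻¹ = i := by rw [← hrel, mul_assoc, mul_inv_cancel₀ hw, mul_one]
    have hq_eq : w * iota z * w⁻¹ = q := by
      rw [show iota z = (z.re : ℍ[ℝ]) + z.im • I0 by ext <;> simp [iota_apply]]
      rw [mul_add, add_mul, mul_smul_comm, smul_mul_assoc, hwI]
      rw [← Quaternion.coe_commutes, mul_assoc, mul_inv_cancel₀ hw, mul_one]
      exact hziq
    -- coefficient identification : `w * b n = a n`
    have hcoeff : ∀ n, w * b n = a n := by
      obtain ⟨r, hball⟩ := HPb
      have hball2 := (mulL w).comp_hasFPowerSeriesOnBall hball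
      have hfun : (⇑(mulL w) ∘ fun x : ℝ => (fun q => w⁻¹ * g (w * q * w⁻¹)) ((x:ℝ):ℍ[ℝ]))
          = fun x : ℝ => g ((x:ℝ):ℍ[ℝ]) := by
        funext x
        show w * (w⁻¹ * g (w * (x:ℍ[ℝ]) * w⁻¹)) = g ((x:ℝ):ℍ[ℝ])
        rw [← mul_assoc, mul_inv_cancel₀ hw, one_mul]
        congr 2
        rw [← Quaternion.coe_commutes, mul_assoc, mul_inv_cancel₀ hw, mul_one]
      rw [hfun] at hball2
      have heq := HasFPowerSeriesAt.eq_formalMultilinearSeries ⟨r, hball2⟩ HPa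
      intro n
      have h1 := congrArg (fun p => FormalMultilinearSeries.coeff p n) heq
      simp only [FormalMultilinearSeries.coeff, ContinuousLinearMap.compFormalMultilinearSeries_apply,
        ContinuousLinearMap.compContinuousMultilinearMap_coe, Function.comp_apply,
        ContinuousMultilinearMap.mkPiRing_apply, Finset.prod_const, Finset.card_univ,
        Fintype.card_fin, one_pow, one_smul, mulL_apply, Pi.one_apply,
        Finset.prod_const_one, ContinuousLinearMap.compFormalMultilinearSeries_apply'] at h1
      erw [ContinuousLinearMap.compFormalMultilinearSeries_apply', ContinuousMultilinearMap.mkPiRing_apply] at h1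
      simpa [mulL_apply] using h1
    have h0 := HSb z (by rw [hzabs]; exact hqn)
    have h1 := (mulL w).hasSum h0
    have hconjpow : ∀ n : ℕ, q ^ n * w = w * (iota z)^n := by
      intro n
      induction n with
      | zero => simp
      | succ n ih =>
        have hqw : q * w = w * iota z := by
          conv_lhs => rw [← hq_eq]
          rw [mul_assoc, inv_mul_cancel₀ hw, mul_one]
        rw [pow_succ, pow_succ, mul_assoc, hqw, ← mul_assoc, ih, mul_assoc]
    have hterm : (fun n => (mulL w) (iota z ^ n * b n)) = fun n => q ^ n * a n := by
      funext n
      rw [mulL_apply, ← mul_assoc, ← hconjpow, mul_assoc, hcoeff]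
    have hval : (mulL w) (w⁻¹ * g (w * iota z * w⁻¹)) = g q := by
      rw [mulL_apply, ← mul_assoc, mul_inv_cancel₀ hw, one_mul, hq_eq]
    rwa [hterm, hval] at h1
  -- Step 2 : Cauchy product with the exponential series
  set t := qinner q v with ht
  have hfg : f q = ((Real.exp (-t) : ℝ) : ℍ[ℝ]) * g q := by
    show f q = _ * (Real.exp (qinner q v) • f q)
    rw [Quaternion.coe_mul_eq_smul, smul_smul, ← ht, ← Real.exp_add, neg_add_cancel,
      Real.exp_zero, one_smul]
  have hexp : HasSum (fun k => (((-t)^k / (Nat.factorial k) : ℝ) : ℍ[ℝ]))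
      ((Real.exp (-t) : ℝ) : ℍ[ℝ]) := by
    have h := NormedSpace.expSeries_div_hasSum_exp (-t)
    rw [← Real.exp_eq_exp_ℝ] at h
    have h2 := ((Algebra.linearMap ℝ ℍ[ℝ]).toContinuousLinearMap).hasSum h
    exact h2
  have hFn : Summable (fun k => ‖(((-t)^k / (Nat.factorial k) : ℝ) : ℍ[ℝ])‖) := by
    refine (summable_congr (fun k => ?_)).mpr (Real.summable_pow_div_factorial |t|)
    rw [Quaternion.norm_coe, Real.norm_eq_abs, abs_div, abs_pow, abs_neg, Nat.abs_cast]
  have hGn : Summable (fun n => ‖q ^ n * a n‖) :=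
    (summable_congr fun n => by rw [norm_mul, norm_pow, mul_comm]).mpr
      (SUMa ‖q‖ (norm_nonneg q) hqn)
  have hmul := tsum_mul_tsum_eq_tsum_sum_antidiagonal_of_summable_norm hFn hGn
  rw [hexp.tsum_eq, HSq.tsum_eq] at hmul
  rw [hfg, hmul]
  apply tsum_congr
  intro n
  rw [Finset.Nat.sum_antidiagonal_eq_sum_range_succ_mk]
  apply Finset.sum_congr rfl
  intro k hk
  show (((-t)^k / (Nat.factorial k) : ℝ) : ℍ[ℝ]) * (q ^ (n-k) * a (n-k)) = _
  rw [key2 q v, ← ht, ← Quaternion.coe_pow, Quaternion.coe_mul_eq_smul,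
    Quaternion.mul_coe_eq_smul, smul_mul_assoc, mul_smul_comm, smul_smul]
  congr 1
  have hfac : ((Nat.factorial k : ℝ)) ≠ 0 := Nat.cast_ne_zero.mpr (Nat.factorial_ne_zero k)
  field_simp
  ring
end
end
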